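/- Let d ≥ 2 be an integer, 1 < α < 2, ε > 0 with 1 + ε < d + α, and 0 < s < (α−1)/(1+ε). Define b : ℝ^{d+1} → [0,∞] by b(t,x) := 1_{{|t| ≤ 1, |x| ≤ 1}} · |x₁|^{−s} for x₁ ≠ 0 (any value on the hyperplane x₁ = 0), where x = (x₁,…,x_d). Then ‖b^{1/(α−1)}‖_{E_{1+ε}} < ∞. -/

import Mathlib

open MeasureTheory ENNReal Set Filter

noncomputable section

/-- The spatial space `ℝ^d`. -/
abbrev Spc (d : ℕ) := EuclideanSpace ℝ (Fin d)

/-- Parabolic cylinder `C_ρ(t,x) = {(s,y) : t ≤ s ≤ t + ρ^α, |y - x| ≤ ρ}`. -/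
def cylP (d : ℕ) (α ρ t : ℝ) (x : Spc d) : Set (ℝ × Spc d) :=
  {p | t ≤ p.1 ∧ p.1 ≤ t + ρ ^ α ∧ dist p.2 x ≤ ρ}

/-- Average of `f` over the parabolic cylinder `C_ρ(t,x)`. -/
def cylAvg (d : ℕ) (α ρ t : ℝ) (x : Spc d) (f : ℝ × Spc d → ℝ≥0∞) : ℝ≥0∞ :=
  (volume (cylP d α ρ t x))⁻¹ * ∫⁻ p in cylP d α ρ t x, f p

/-- Parabolic Morrey norm `‖v‖_{E_q}`. -/
def morreyE (d : ℕ) (α q : ℝ) (v : ℝ × Spc d → ℝ≥0∞) : ℝ≥0∞ :=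
  ⨆ (ρ : ℝ) (_ : 0 < ρ) (t : ℝ) (x : Spc d),
    ENNReal.ofReal ρ * (cylAvg d α ρ t x (fun p => v p ^ q)) ^ (1 / q)

/-- Elliptic Morrey norm `‖w‖_{M_q}` on `ℝ^d`. -/
def morreyM (d : ℕ) (q : ℝ) (w : Spc d → ℝ≥0∞) : ℝ≥0∞ :=
  ⨆ (ρ : ℝ) (_ : 0 < ρ) (x : Spc d),
    ENNReal.ofReal ρ *
      ((volume (Metric.closedBall x ρ))⁻¹ *
        ∫⁻ y in Metric.closedBall x ρ, w y ^ q) ^ (1 / q)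

/-- Fractional (parabolic) maximal function `M_β f(t,x)`. -/
def maxFun (d : ℕ) (α β : ℝ) (f : ℝ × Spc d → ℝ≥0∞) (t : ℝ) (x : Spc d) : ℝ≥0∞ :=
  ⨆ (ρ : ℝ) (_ : 0 < ρ), ENNReal.ofReal (ρ ^ β) * cylAvg d α ρ t x f

/-- Uncentered parabolic maximal function `M̂ f(z)`, sup over all parabolic
cylinders containing `z`. -/
def hatM (d : ℕ) (α : ℝ) (f : ℝ × Spc d → ℝ≥0∞) (z : ℝ × Spc d) : ℝ≥0∞ :=
  ⨆ (ρ : ℝ) (_ : 0 < ρ) (t : ℝ) (x : Spc d) (_ : z ∈ cylP d α ρ t x),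
    cylAvg d α ρ t x f

/-- The kernel `p_γ(s,y) = 1_{s>0} s^{γ/2} min(|y|^{-d-α}, s^{-(d+α)/α})`. -/
def pKer (d : ℕ) (α γ : ℝ) (s : ℝ) (y : Spc d) : ℝ≥0∞ :=
  if 0 < s then
    (if s ^ (1 / α) ≤ ‖y‖ then ENNReal.ofReal (s ^ (γ / 2) * ‖y‖ ^ (-(d : ℝ) - α))
     else ENNReal.ofReal (s ^ (γ / 2 - ((d : ℝ) + α) / α)))
  else 0

/-- `P_γ f(t,x) = ∫ p_γ(s,y) f(t+s, x+y) dy ds`. -/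
def Pop (d : ℕ) (α γ : ℝ) (f : ℝ × Spc d → ℝ≥0∞) (t : ℝ) (x : Spc d) : ℝ≥0∞ :=
  ∫⁻ p : ℝ × Spc d, pKer d α γ p.1 p.2 * f (t + p.1, x + p.2)

/-- `P*_γ f(t,x) = ∫ p_γ(s,y) f(t-s, x+y) dy ds`. -/
def PopStar (d : ℕ) (α γ : ℝ) (f : ℝ × Spc d → ℝ≥0∞) (t : ℝ) (x : Spc d) : ℝ≥0∞ :=
  ∫⁻ p : ℝ × Spc d, pKer d α γ p.1 p.2 * f (t - p.1, x + p.2)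


section helpers

lemma measAbsRpow (c : ℝ) (hc : c ≠ 0) : Measurable fun u : ℝ => |u| ^ c := by
  have h : (fun u : ℝ => |u| ^ c) =
      fun u : ℝ => if u = 0 then 0 else Real.exp (Real.log |u| * c) := by
    funext u
    by_cases hu : u = 0
    · simp [hu, Real.zero_rpow hc]
    · rw [if_neg hu, Real.rpow_def_of_pos (abs_pos.mpr hu)]
  rw [h]
  exact Measurable.ite (measurableSet_eq) measurable_const
    (Real.measurable_exp.comp ((Real.measurable_log.comp measurable_abs).mul measurable_const))

lemma coord_dist_le {d : ℕ} (y x : Spc d) (i : Fin d) : |y i - x i| ≤ dist y x := by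
  rw [EuclideanSpace.dist_eq]
  have h1 : |y i - x i| = Real.sqrt (dist (y i) (x i) ^ 2) := by
    rw [Real.dist_eq, Real.sqrt_sq_eq_abs, abs_abs]
  rw [h1]
  exact Real.sqrt_le_sqrt (Finset.single_le_sum
    (f := fun j => dist (y j) (x j) ^ 2) (fun j _ => sq_nonneg _) (Finset.mem_univ i))

lemma coord_abs_le_norm {d : ℕ} (y : Spc d) (i : Fin d) : |y i| ≤ ‖y‖ := by
  have h := coord_dist_le y 0 i
  simpa using h

lemma inv_cancel_helper {a v R : ℝ≥0∞} (ha0 : a ≠ 0) (hat : a ≠ ⊤) (hR0 : R ≠ 0)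
    (hRt : R ≠ ⊤) (_hv0 : v ≠ 0) (_hvt : v ≠ ⊤) (W : ℝ≥0∞) (n : ℕ) :
    (a * (R ^ (n+1) * v))⁻¹ * (a * (W * R ^ n)) = W * v⁻¹ * R⁻¹ := by
  rw [ENNReal.mul_inv (Or.inl ha0) (Or.inl hat),
    ENNReal.mul_inv (Or.inl (pow_ne_zero _ hR0)) (Or.inl (ENNReal.pow_ne_top hRt))]
  have h1 : a⁻¹ * a = 1 := ENNReal.inv_mul_cancel ha0 hat
  have h2 : (R ^ (n+1))⁻¹ * R ^ n = R⁻¹ := by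
    rw [pow_succ, ENNReal.mul_inv (Or.inl (pow_ne_zero _ hR0)) (Or.inl (ENNReal.pow_ne_top hRt)),
      mul_comm ((R ^ n)⁻¹) (R⁻¹), mul_assoc,
      ENNReal.inv_mul_cancel (pow_ne_zero _ hR0) (ENNReal.pow_ne_top hRt), mul_one]
  calc a⁻¹ * ((R ^ (n+1))⁻¹ * v⁻¹) * (a * (W * R ^ n))
      = (a⁻¹ * a) * ((R ^ (n+1))⁻¹ * R ^ n) * (v⁻¹ * W) := by ring
    _ = W * v⁻¹ * R⁻¹ := by rw [h1, h2, one_mul]; ring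

lemma inv_split_helper {a bb v : ℝ≥0∞} (ha0 : a ≠ 0) (hat : a ≠ ⊤) (hb0 : bb ≠ 0)
    (hbt : bb ≠ ⊤) (W : ℝ≥0∞) :
    (a * (bb * v))⁻¹ * W = W * v⁻¹ * (a⁻¹ * bb⁻¹) := by
  rw [ENNReal.mul_inv (Or.inl ha0) (Or.inl hat), ENNReal.mul_inv (Or.inl hb0) (Or.inl hbt)]
  ring

lemma oneD_finite {σ : ℝ} (hσ1 : σ < 1) :
    ∫⁻ u : ℝ, (if |u| ≤ 1 then ENNReal.ofReal (|u| ^ (-σ)) else 0) < ⊤ := by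
  have hIpos : ∫⁻ u in Icc (0:ℝ) 1, ENNReal.ofReal (|u| ^ (-σ)) < ⊤ := by
    have h1 : IntervalIntegrable (fun u : ℝ => u ^ (-σ)) volume 0 1 :=
      intervalIntegral.intervalIntegrable_rpow' (by linarith)
    have h2 : IntegrableOn (fun u : ℝ => u ^ (-σ)) (Icc (0:ℝ) 1) volume := by
      rw [integrableOn_Icc_iff_integrableOn_Ioc]
      exact (intervalIntegrable_iff_integrableOn_Ioc_of_le (by norm_num)).mp h1
    have h3 : IntegrableOn (fun u : ℝ => |u| ^ (-σ)) (Icc (0:ℝ) 1) volume := by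
      refine h2.congr_fun (fun u hu => ?_) measurableSet_Icc
      rw [abs_of_nonneg hu.1]
    exact h3.lintegral_lt_top
  have hIneg : ∫⁻ u in Icc (-1:ℝ) 0, ENNReal.ofReal (|u| ^ (-σ))
      = ∫⁻ u in Icc (0:ℝ) 1, ENNReal.ofReal (|u| ^ (-σ)) := by
    have hmp : MeasurePreserving (fun u : ℝ => -u) volume volume :=
      Measure.measurePreserving_neg _
    have hemb : MeasurableEmbedding (fun u : ℝ => -u) :=
      (Homeomorph.neg ℝ).measurableEmbedding
    have h := hmp.setLIntegral_comp_preimage_emb hemb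
      (fun u => ENNReal.ofReal (|u| ^ (-σ))) (Icc 0 1)
    have hpre : (fun u : ℝ => -u) ⁻¹' Icc (0:ℝ) 1 = Icc (-1:ℝ) 0 := by
      ext u
      simp only [Set.mem_preimage, Set.mem_Icc]
      constructor <;> intro h <;> constructor <;> linarith [h.1, h.2]
    rw [hpre] at h
    simp only [abs_neg] at h
    exact h
  have heq : ∫⁻ u : ℝ, (if |u| ≤ 1 then ENNReal.ofReal (|u| ^ (-σ)) else 0)
      = ∫⁻ u in Icc (-1:ℝ) 1, ENNReal.ofReal (|u| ^ (-σ)) := by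
    rw [← lintegral_indicator measurableSet_Icc]
    refine lintegral_congr fun u => ?_
    rw [Set.indicator_apply]
    congr 1
    simp [Set.mem_Icc, abs_le]
  rw [heq]
  calc ∫⁻ u in Icc (-1:ℝ) 1, ENNReal.ofReal (|u| ^ (-σ))
      ≤ ∫⁻ u in Icc (-1:ℝ) 0 ∪ Icc (0:ℝ) 1, ENNReal.ofReal (|u| ^ (-σ)) := by
        refine lintegral_mono_set fun u hu => ?_
        rcases le_total u 0 with h | h
        · exact Or.inl ⟨hu.1, h⟩
        · exact Or.inr ⟨h, hu.2⟩
    _ ≤ (∫⁻ u in Icc (-1:ℝ) 0, ENNReal.ofReal (|u| ^ (-σ)))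
        + ∫⁻ u in Icc (0:ℝ) 1, ENNReal.ofReal (|u| ^ (-σ)) := lintegral_union_le _ _ _
    _ < ⊤ := by
        rw [hIneg]
        exact ENNReal.add_lt_top.mpr ⟨hIpos, hIpos⟩

lemma hyperplane_null (n : ℕ) (i : Fin (n+1)) :
    volume {y : Spc (n+1) | y i = 0} = 0 := by
  have h := (EuclideanSpace.volume_preserving_symm_measurableEquiv_toLp (Fin (n+1))).measure_preimage
    (s := {f : Fin (n+1) → ℝ | f i = 0})
    (((measurable_pi_apply i) (measurableSet_singleton 0)).nullMeasurableSet)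
  have h2 : volume {f : Fin (n+1) → ℝ | f i = 0} = 0 := by
    rw [volume_pi]
    exact Measure.pi_hyperplane _ i 0
  rw [h2] at h
  exact h

lemma spatial_bound (n : ℕ) {σ : ℝ} (hσ : σ ≠ 0) (ρ : ℝ) (x : Spc (n+1)) :
    ∫⁻ y in Metric.closedBall x ρ,
        (if ‖y‖ ≤ 1 then ENNReal.ofReal (|y 0| ^ (-σ)) else 0)
      ≤ (∫⁻ u : ℝ, (if |u| ≤ 1 then ENNReal.ofReal (|u| ^ (-σ)) else 0))
        * (min (ENNReal.ofReal (2*ρ)) (ENNReal.ofReal 2)) ^ n := by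
  classical
  set g0 : ℝ → ℝ≥0∞ := fun u => if |u| ≤ 1 then ENNReal.ofReal (|u| ^ (-σ)) else 0 with hg0def
  have hg0meas : Measurable g0 := by
    refine Measurable.ite ?_ (ENNReal.measurable_ofReal.comp (measAbsRpow _ (by simpa using hσ)))
      measurable_const
    exact measurableSet_le continuous_abs.measurable measurable_const
  set F : Spc (n+1) → ℝ≥0∞ :=
    fun y => if ‖y‖ ≤ 1 then ENNReal.ofReal (|y 0| ^ (-σ)) else 0 with hFdef
  set J : Fin n → Set ℝ := fun i => Icc (x i.succ - ρ) (x i.succ + ρ) ∩ Icc (-1) 1 with hJdef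
  have hJm : ∀ i, MeasurableSet (J i) := fun i => measurableSet_Icc.inter measurableSet_Icc
  set box : Set (Fin n → ℝ) := Set.univ.pi J with hboxdef
  have hboxm : MeasurableSet box := MeasurableSet.univ_pi hJm
  set Ψ : ℝ × (Fin n → ℝ) → ℝ≥0∞ := fun p => g0 p.1 * box.indicator 1 p.2 with hΨdef
  have hΨm : Measurable Ψ :=
    (hg0meas.comp measurable_fst).mul
      ((measurable_const.indicator hboxm).comp measurable_snd)
  have hpoint : ∀ y : Spc (n+1),
      (Metric.closedBall x ρ).indicator F y ≤ Ψ (y 0, fun i => y i.succ) := by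
    intro y
    by_cases hy : y ∈ Metric.closedBall x ρ
    · rw [Set.indicator_of_mem hy]
      by_cases hn : ‖y‖ ≤ 1
      · have h0 : F y = ENNReal.ofReal (|y 0| ^ (-σ)) := if_pos hn
        have hg : g0 (y 0) = ENNReal.ofReal (|y 0| ^ (-σ)) :=
          if_pos ((coord_abs_le_norm y 0).trans hn)
        have hbox1 : (fun i => y i.succ) ∈ box := by
          intro i _
          refine ⟨?_, ?_⟩
          · have h1 : |y i.succ - x i.succ| ≤ ρ :=
              (coord_dist_le y x i.succ).trans (Metric.mem_closedBall.mp hy)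
            rw [abs_le] at h1
            exact ⟨by linarith [h1.1], by linarith [h1.2]⟩
          · have h2 : |y i.succ| ≤ 1 := (coord_abs_le_norm y i.succ).trans hn
            rw [abs_le] at h2
            exact h2
        simp only [hΨdef, Set.indicator_of_mem hbox1, Pi.one_apply, mul_one, h0, hg, le_refl]
      · have h0 : F y = 0 := if_neg hn
        simp [h0]
    · rw [Set.indicator_of_notMem hy]
      exact zero_le
  calc ∫⁻ y in Metric.closedBall x ρ, F y
      = ∫⁻ y : Spc (n+1), (Metric.closedBall x ρ).indicator F y := by
        rw [lintegral_indicator measurableSet_closedBall]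
    _ ≤ ∫⁻ y : Spc (n+1), Ψ (y 0, fun i => y i.succ) := lintegral_mono hpoint
    _ = ∫⁻ f : Fin (n+1) → ℝ, Ψ (f 0, fun i => f i.succ) := by
        exact (EuclideanSpace.volume_preserving_symm_measurableEquiv_toLp (Fin (n+1))).lintegral_comp
          (hΨm.comp ((measurable_pi_apply 0).prodMk
            (measurable_pi_lambda _ fun i => measurable_pi_apply _)))
    _ = ∫⁻ p : ℝ × (Fin n → ℝ), Ψ p
          ∂((volume : Measure ℝ).prod (Measure.pi fun _ => (volume : Measure ℝ))) := by
        rw [volume_pi, ← (measurePreserving_piFinSuccAbove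
          (fun _ : Fin (n+1) => (volume : Measure ℝ)) 0).lintegral_comp hΨm]
        refine lintegral_congr fun f => ?_
        congr 1
    _ = (∫⁻ u : ℝ, g0 u) * Measure.pi (fun _ => (volume : Measure ℝ)) box := by
        rw [lintegral_prod_mul hg0meas.aemeasurable
          ((measurable_one.indicator hboxm).aemeasurable)]
        rw [lintegral_indicator_one hboxm]
    _ ≤ (∫⁻ u : ℝ, g0 u) * (min (ENNReal.ofReal (2*ρ)) (ENNReal.ofReal 2)) ^ n := by
        refine mul_le_mul_right ?_ _
        rw [hboxdef, Measure.pi_pi]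
        calc ∏ i : Fin n, volume (J i)
            ≤ ∏ _i : Fin n, min (ENNReal.ofReal (2*ρ)) (ENNReal.ofReal 2) := by
              refine Finset.prod_le_prod' fun i _ => le_min ?_ ?_
              · refine (measure_mono Set.inter_subset_left).trans ?_
                rw [Real.volume_Icc]
                exact ENNReal.ofReal_le_ofReal (by ring_nf; exact le_refl _)
              · refine (measure_mono Set.inter_subset_right).trans ?_
                rw [Real.volume_Icc]
                norm_num
          _ = (min (ENNReal.ofReal (2*ρ)) (ENNReal.ofReal 2)) ^ n := by
              rw [Finset.prod_const, Finset.card_univ, Fintype.card_fin]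

end helpers

/-- Example (E.3): the drift with hypersurface singularity
`b(t,x) = 1_{|t| ≤ 1, |x| ≤ 1} |x₁|^{-s}` (any value on `{x₁ = 0}`),
`0 < s < (α-1)/(1+ε)`, satisfies `‖b^{1/(α-1)}‖_{E_{1+ε}} < ∞`. -/
theorem stmt_16 (d : ℕ) (hd : 2 ≤ d) (α ε s : ℝ) (hα1 : 1 < α) (hα2 : α < 2)
    (hε : 0 < ε) (hεd : 1 + ε < d + α) (hs1 : 0 < s) (hs2 : s < (α - 1) / (1 + ε))
    (b : ℝ × Spc d → ℝ≥0∞)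
    (hb : ∀ (t : ℝ) (x : Spc d), x ⟨0, by omega⟩ ≠ 0 →
      b (t, x) =
        (if |t| ≤ 1 ∧ ‖x‖ ≤ 1 then ENNReal.ofReal (|x ⟨0, by omega⟩| ^ (-s)) else 0)) :
    morreyE d α (1 + ε) (fun z => b z ^ (1 / (α - 1))) < ⊤ := by
  obtain ⟨n, rfl⟩ : ∃ n, d = n + 1 := ⟨d - 1, by omega⟩
  classical
  have hα0 : (0:ℝ) < α - 1 := by linarith
  have hq0 : (0:ℝ) < 1 + ε := by linarith
  have hqinv0 : (0:ℝ) ≤ 1 / (1 + ε) := by positivity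
  set σ : ℝ := s * (1 + ε) / (α - 1) with hσdef
  have hσ0 : 0 < σ := div_pos (mul_pos hs1 hq0) hα0
  have hσ1 : σ < 1 := by
    rw [hσdef, div_lt_one hα0]
    have h := mul_lt_mul_of_pos_right hs2 hq0
    rwa [div_mul_cancel₀ _ (ne_of_gt hq0)] at h
  set g0 : ℝ → ℝ≥0∞ := fun u => if |u| ≤ 1 then ENNReal.ofReal (|u| ^ (-σ)) else 0 with hg0def
  set A : ℝ≥0∞ := ∫⁻ u : ℝ, g0 u with hAdef
  have hA : A < ⊤ := oneD_finite hσ1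
  set F : Spc (n+1) → ℝ≥0∞ :=
    fun y => if ‖y‖ ≤ 1 then ENNReal.ofReal (|y 0| ^ (-σ)) else 0 with hFdef
  have hFmeas : Measurable F := by
    refine Measurable.ite ?_ (ENNReal.measurable_ofReal.comp
      ((measAbsRpow _ (by linarith)).comp
        ((measurable_pi_apply (0 : Fin (n+1))).comp
          (MeasurableEquiv.toLp 2 (Fin (n+1) → ℝ)).symm.measurable))) measurable_const
    exact measurableSet_le continuous_norm.measurable measurable_const
  set timeF : ℝ → ℝ≥0∞ := fun u => if |u| ≤ 1 then (1:ℝ≥0∞) else 0 with htFdef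
  have htFmeas : Measurable timeF :=
    Measurable.ite (measurableSet_le continuous_abs.measurable measurable_const)
      measurable_const measurable_const
  set V : ℝ≥0∞ := volume (Metric.ball (0 : Spc (n+1)) 1) with hVdef
  have hV0 : V ≠ 0 := (Metric.measure_ball_pos volume _ one_pos).ne'
  have hVtop : V ≠ ⊤ := measure_ball_lt_top.ne
  set K : ℝ≥0∞ := 2 ^ (n+1) * A * V⁻¹ with hKdef
  have hKtop : K ≠ ⊤ :=
    ENNReal.mul_ne_top (ENNReal.mul_ne_top (ENNReal.pow_ne_top ENNReal.ofNat_ne_top) hA.ne)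
      (ENNReal.inv_ne_top.mpr hV0)
  have hC : K ^ (1/(1+ε)) < ⊤ := ENNReal.rpow_lt_top_of_nonneg hqinv0 hKtop
  refine lt_of_le_of_lt ?_ hC
  unfold morreyE
  refine iSup_le fun ρ => iSup_le fun hρ => iSup_le fun t => iSup_le fun x => ?_
  simp only [cylAvg]
  set R : ℝ≥0∞ := ENNReal.ofReal ρ with hRdef
  have hR0 : R ≠ 0 := (ENNReal.ofReal_pos.mpr hρ).ne'
  have hRtop : R ≠ ⊤ := ENNReal.ofReal_ne_top
  have hRα0 : R ^ α ≠ 0 := by simp [ENNReal.rpow_eq_zero_iff, hR0, hRtop]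
  have hRαtop : R ^ α ≠ ⊤ := by simp [ENNReal.rpow_eq_top_iff, hR0, hRtop]
  have hcyl : cylP (n+1) α ρ t x = Icc t (t + ρ ^ α) ×ˢ Metric.closedBall x ρ := by
    ext z
    simp [cylP, Set.mem_prod, and_assoc, Metric.mem_closedBall]
  have hvolIcc : volume (Icc t (t + ρ^α)) = R ^ α := by
    rw [Real.volume_Icc]
    have h1 : t + ρ^α - t = ρ^α := by ring
    rw [h1, hRdef]
    exact (ENNReal.ofReal_rpow_of_pos hρ).symm
  have hvolBall : volume (Metric.closedBall x ρ) = R ^ (n+1) * V := by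
    rw [Measure.addHaar_closedBall _ _ hρ.le, finrank_euclideanSpace_fin,
      ENNReal.ofReal_pow hρ.le]
  have hvolCyl : volume (cylP (n+1) α ρ t x) = R ^ α * (R ^ (n+1) * V) := by
    rw [hcyl, Measure.volume_eq_prod, Measure.prod_prod, hvolIcc, hvolBall]
  have hnull : volume {z : ℝ × Spc (n+1) | z.2 0 = 0} = 0 := by
    have h2 : {z : ℝ × Spc (n+1) | z.2 0 = 0}
        = (univ : Set ℝ) ×ˢ {y : Spc (n+1) | y 0 = 0} := by
      ext z; simp [Set.mem_prod]
    rw [h2, Measure.volume_eq_prod, Measure.prod_prod, hyperplane_null n 0, mul_zero]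
  have hae : ∀ᵐ z : ℝ × Spc (n+1) ∂(volume.restrict (cylP (n+1) α ρ t x)),
      (b z ^ (1/(α-1))) ^ (1+ε) = timeF z.1 * F z.2 := by
    refine ae_restrict_of_ae ?_
    rw [ae_iff]
    refine measure_mono_null (fun z hz => ?_) hnull
    simp only [Set.mem_setOf_eq] at hz ⊢
    by_contra h0
    apply hz
    have hbz : b z = (if |z.1| ≤ 1 ∧ ‖z.2‖ ≤ 1
        then ENNReal.ofReal (|z.2 0| ^ (-s)) else 0) := by
      have h := hb z.1 z.2 h0
      rw [Prod.mk.eta] at h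
      exact h
    rw [hbz]
    by_cases hcond : |z.1| ≤ 1 ∧ ‖z.2‖ ≤ 1
    · rw [if_pos hcond]
      have h1 : (0:ℝ) < |z.2 0| := abs_pos.mpr h0
      have h2 : (0:ℝ) < |z.2 0| ^ (-s) := Real.rpow_pos_of_pos h1 _
      rw [← ENNReal.rpow_mul, ENNReal.ofReal_rpow_of_pos h2, ← Real.rpow_mul (abs_nonneg _)]
      have hexp : -s * (1/(α-1) * (1+ε)) = -σ := by
        rw [hσdef]
        field_simp
      rw [hexp, htFdef, hFdef]
      simp only []
      rw [if_pos hcond.1, if_pos hcond.2, one_mul]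
    · rw [if_neg hcond]
      rw [ENNReal.zero_rpow_of_pos (one_div_pos.mpr hα0), ENNReal.zero_rpow_of_pos (by linarith)]
      rcases not_and_or.mp hcond with h | h
      · rw [htFdef]
        simp only []
        rw [if_neg h, zero_mul]
      · rw [hFdef]
        simp only []
        rw [if_neg h, mul_zero]
  have hItot : ∫⁻ z in cylP (n+1) α ρ t x, (b z ^ (1/(α-1))) ^ (1+ε)
      = (∫⁻ u in Icc t (t + ρ^α), timeF u) * ∫⁻ y in Metric.closedBall x ρ, F y := by
    rw [lintegral_congr_ae hae, hcyl, Measure.volume_eq_prod, ← Measure.prod_restrict]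
    exact lintegral_prod_mul htFmeas.aemeasurable hFmeas.aemeasurable
  have htime : (∫⁻ u in Icc t (t + ρ^α), timeF u) ≤ min (R ^ α) 2 := by
    refine le_min ?_ ?_
    · calc ∫⁻ u in Icc t (t+ρ^α), timeF u ≤ ∫⁻ _u in Icc t (t+ρ^α), 1 := by
            refine lintegral_mono fun u => ?_
            rw [htFdef]
            simp only []
            split <;> simp
        _ = volume (Icc t (t+ρ^α)) := setLIntegral_one _
        _ = R ^ α := hvolIcc
    · calc ∫⁻ u in Icc t (t+ρ^α), timeF u ≤ ∫⁻ u, timeF u := setLIntegral_le_lintegral _ _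
        _ = volume {u : ℝ | |u| ≤ 1} := by
            rw [← lintegral_indicator_one
              (measurableSet_le continuous_abs.measurable measurable_const)]
            refine lintegral_congr fun u => ?_
            rw [htFdef, Set.indicator_apply]
            rfl
        _ ≤ 2 := by
            have h : {u : ℝ | |u| ≤ 1} = Icc (-1:ℝ) 1 := by ext u; simp [abs_le]
            rw [h, Real.volume_Icc]
            norm_num
  have hspace : (∫⁻ y in Metric.closedBall x ρ, F y)
      ≤ A * (min (ENNReal.ofReal (2*ρ)) (ENNReal.ofReal 2)) ^ n := by
    rw [hFdef, hAdef, hg0def]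
    exact spatial_bound n (by linarith) ρ x
  rcases le_total ρ 1 with hρ1 | hρ1
  · -- small radius
    have hminB : min (ENNReal.ofReal (2*ρ)) (ENNReal.ofReal 2) ≤ 2 * R := by
      refine (min_le_left _ _).trans ?_
      rw [ENNReal.ofReal_mul (by norm_num : (0:ℝ) ≤ 2), hRdef]
      simp
    have hW1top : A * 2^n * V⁻¹ ≠ ⊤ :=
      ENNReal.mul_ne_top (ENNReal.mul_ne_top hA.ne (ENNReal.pow_ne_top ENNReal.ofNat_ne_top))
        (ENNReal.inv_ne_top.mpr hV0)
    have havg2 : (volume (cylP (n+1) α ρ t x))⁻¹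
        * (∫⁻ p in cylP (n+1) α ρ t x, (b p ^ (1/(α-1))) ^ (1+ε))
        ≤ (A * 2^n * V⁻¹) * R⁻¹ := by
      calc (volume (cylP (n+1) α ρ t x))⁻¹
            * (∫⁻ p in cylP (n+1) α ρ t x, (b p ^ (1/(α-1))) ^ (1+ε))
          = (R ^ α * (R ^ (n+1) * V))⁻¹
            * ((∫⁻ u in Icc t (t + ρ^α), timeF u) * ∫⁻ y in Metric.closedBall x ρ, F y) := by
            rw [hvolCyl, hItot]
        _ ≤ (R ^ α * (R ^ (n+1) * V))⁻¹ * (R ^ α * ((A * 2^n) * R^n)) := by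
            refine mul_le_mul_right ?_ _
            refine mul_le_mul' (htime.trans (min_le_left _ _)) (hspace.trans ?_)
            calc A * (min (ENNReal.ofReal (2*ρ)) (ENNReal.ofReal 2)) ^ n
                ≤ A * (2 * R)^n := by gcongr
              _ = (A * 2^n) * R^n := by rw [mul_pow]; ring
        _ = (A * 2^n) * V⁻¹ * R⁻¹ :=
            inv_cancel_helper hRα0 hRαtop hR0 hRtop hV0 hVtop _ n
        _ = (A * 2^n * V⁻¹) * R⁻¹ := by ring
    have hR1 : R ≤ 1 := by rw [hRdef]; exact ENNReal.ofReal_le_one.mpr hρ1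
    have hfin : R * ((A * 2^n * V⁻¹) * R⁻¹) ^ (1/(1+ε)) ≤ K ^ (1/(1+ε)) := by
      rw [ENNReal.mul_rpow_of_ne_top hW1top (ENNReal.inv_ne_top.mpr hR0)]
      rw [ENNReal.inv_rpow, ← ENNReal.rpow_neg]
      calc R * ((A * 2^n * V⁻¹) ^ (1/(1+ε)) * R ^ (-(1/(1+ε))))
          = (A * 2^n * V⁻¹) ^ (1/(1+ε)) * (R * R ^ (-(1/(1+ε)))) := by ring
        _ = (A * 2^n * V⁻¹) ^ (1/(1+ε)) * R ^ (1 + -(1/(1+ε))) := by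
            rw [ENNReal.rpow_add 1 _ hR0 hRtop, ENNReal.rpow_one]
        _ ≤ (A * 2^n * V⁻¹) ^ (1/(1+ε)) * 1 := by
            refine mul_le_mul_right (ENNReal.rpow_le_one hR1 ?_) _
            have : 1/(1+ε) ≤ 1 := by
              rw [div_le_one hq0]; linarith
            linarith
        _ ≤ K ^ (1/(1+ε)) := by
            rw [mul_one]
            refine ENNReal.rpow_le_rpow ?_ hqinv0
            rw [hKdef, mul_comm A (2^n)]
            refine mul_le_mul_left (mul_le_mul_left ?_ A) _
            rw [pow_succ]
            exact le_mul_of_one_le_right' one_le_two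
    calc R * ((volume (cylP (n+1) α ρ t x))⁻¹
          * (∫⁻ p in cylP (n+1) α ρ t x, (b p ^ (1/(α-1))) ^ (1+ε))) ^ (1/(1+ε))
        ≤ R * ((A * 2^n * V⁻¹) * R⁻¹) ^ (1/(1+ε)) := by
          exact mul_le_mul_right (ENNReal.rpow_le_rpow havg2 hqinv0) _
      _ ≤ K ^ (1/(1+ε)) := hfin
  · -- large radius
    have hR1 : (1:ℝ≥0∞) ≤ R := by rw [hRdef]; exact ENNReal.one_le_ofReal.mpr hρ1
    have hminB : min (ENNReal.ofReal (2*ρ)) (ENNReal.ofReal 2) ≤ 2 := by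
      refine (min_le_right _ _).trans ?_
      norm_num
    have havg2 : (volume (cylP (n+1) α ρ t x))⁻¹
        * (∫⁻ p in cylP (n+1) α ρ t x, (b p ^ (1/(α-1))) ^ (1+ε))
        ≤ K * ((R ^ α)⁻¹ * (R ^ (n+1) : ℝ≥0∞)⁻¹) := by
      calc (volume (cylP (n+1) α ρ t x))⁻¹
            * (∫⁻ p in cylP (n+1) α ρ t x, (b p ^ (1/(α-1))) ^ (1+ε))
          = (R ^ α * (R ^ (n+1) * V))⁻¹
            * ((∫⁻ u in Icc t (t + ρ^α), timeF u) * ∫⁻ y in Metric.closedBall x ρ, F y) := by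
            rw [hvolCyl, hItot]
        _ ≤ (R ^ α * (R ^ (n+1) * V))⁻¹ * (2 * (A * 2^n)) := by
            refine mul_le_mul_right ?_ _
            refine mul_le_mul' (htime.trans (min_le_right _ _)) (hspace.trans ?_)
            gcongr
        _ = (2 * (A * 2^n)) * V⁻¹ * ((R ^ α)⁻¹ * (R ^ (n+1) : ℝ≥0∞)⁻¹) :=
            inv_split_helper hRα0 hRαtop (pow_ne_zero _ hR0) (ENNReal.pow_ne_top hRtop) _
        _ = K * ((R ^ α)⁻¹ * (R ^ (n+1) : ℝ≥0∞)⁻¹) := by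
            rw [hKdef]
            congr 1
            rw [pow_succ]
            ring
    have hcomb : (R ^ α)⁻¹ * ((R ^ (n+1) : ℝ≥0∞))⁻¹ = R ^ (-(α + ((n+1:ℕ):ℝ))) := by
      rw [← ENNReal.rpow_natCast R (n+1), ← ENNReal.rpow_neg, ← ENNReal.rpow_neg,
        ← ENNReal.rpow_add _ _ hR0 hRtop]
      congr 1
      ring
    have hRetop : R ^ (-(α + ((n+1:ℕ):ℝ))) ≠ ⊤ := by
      simp [ENNReal.rpow_eq_top_iff, hR0, hRtop]
    calc R * ((volume (cylP (n+1) α ρ t x))⁻¹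
          * (∫⁻ p in cylP (n+1) α ρ t x, (b p ^ (1/(α-1))) ^ (1+ε))) ^ (1/(1+ε))
        ≤ R * (K * R ^ (-(α + ((n+1:ℕ):ℝ)))) ^ (1/(1+ε)) := by
          refine mul_le_mul_right (ENNReal.rpow_le_rpow ?_ hqinv0) _
          rw [← hcomb]
          exact havg2
      _ = K ^ (1/(1+ε)) * (R * (R ^ (-(α + ((n+1:ℕ):ℝ)))) ^ (1/(1+ε))) := by
          rw [ENNReal.mul_rpow_of_ne_top hKtop hRetop]
          ring
      _ = K ^ (1/(1+ε)) * R ^ (1 + (-(α + ((n+1:ℕ):ℝ))) * (1/(1+ε))) := by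
          congr 1
          rw [← ENNReal.rpow_mul, ENNReal.rpow_add 1 _ hR0 hRtop, ENNReal.rpow_one]
      _ ≤ K ^ (1/(1+ε)) * 1 := by
          refine mul_le_mul_right ?_ _
          have hexp : 1 + (-(α + ((n+1:ℕ):ℝ))) * (1/(1+ε)) ≤ 0 := by
            have hd : (1:ℝ) + ε ≤ α + ((n+1:ℕ):ℝ) := by
              push_cast
              push_cast at hεd
              linarith
            have h1 : (1:ℝ) ≤ (α + ((n+1:ℕ):ℝ)) * (1/(1+ε)) := by
              rw [mul_one_div, le_div_iff₀ hq0]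
              linarith
            rw [neg_mul]
            linarith
          calc R ^ (1 + (-(α + ((n+1:ℕ):ℝ))) * (1/(1+ε)))
              ≤ R ^ (0:ℝ) := ENNReal.rpow_le_rpow_of_exponent_le hR1 hexp
            _ = 1 := by simp
      _ = K ^ (1/(1+ε)) := mul_one _
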